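/- Let K be a field of characteristic zero, n ≥ 1, and let R be a commutative associative (possibly non-unital) K-algebra such that rⁿ = 0 for every r ∈ R. Then r₁·r₂·…·r_n = 0 for all r₁,…,r_n ∈ R; that is, the nilpotency index of R is at most n. -/

import Mathlib

open Finset

/-- Vandermonde inversion: if `∑ k, j^k • v k = 0` for `j = 0, …, m`, each `v k = 0`. -/
lemma vand_aux {K A : Type} [Field K] [CharZero K] [AddCommGroup A] [Module K A]
    (m : ℕ) (v : Fin (m + 1) → A)
    (h : ∀ j : Fin (m + 1), ∑ k : Fin (m + 1), ((j : ℕ) : K) ^ (k : ℕ) • v k = 0) :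
    ∀ i, v i = 0 := by
  set M : Matrix (Fin (m + 1)) (Fin (m + 1)) K :=
    Matrix.vandermonde (fun j => ((j : ℕ) : K)) with hM
  have hdet : IsUnit M.det := by
    rw [hM, Matrix.det_vandermonde]
    apply isUnit_iff_ne_zero.2
    apply Finset.prod_ne_zero_iff.2
    intro i _
    apply Finset.prod_ne_zero_iff.2
    intro j hj
    have hij : i < j := Finset.mem_Ioi.mp hj
    have hne : (i : ℕ) ≠ (j : ℕ) := fun hh => hij.ne (Fin.val_injective hh)
    have : ((i : ℕ) : K) ≠ ((j : ℕ) : K) := by exact_mod_cast hne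
    exact sub_ne_zero.2 (Ne.symm this)
  intro i
  have key : ∑ j, (M⁻¹ i j) • (∑ k, (M j k) • v k) = v i := by
    simp_rw [Finset.smul_sum, smul_smul]
    rw [Finset.sum_comm]
    have : ∀ k, (∑ j, (M⁻¹ i j * M j k) • v k) = ((M⁻¹ * M) i k) • v k := by
      intro k
      rw [Matrix.mul_apply, ← Finset.sum_smul]
    simp_rw [this, Matrix.nonsing_inv_mul M hdet, Matrix.one_apply]
    simp
  have hz : ∀ j : Fin (m + 1), (∑ k, (M j k) • v k) = 0 := by
    intro j
    have := h j
    simpa [hM, Matrix.vandermonde] using this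
  rw [← key]
  simp [hz]

/-- Polarization step. -/
lemma polar_aux {K A : Type} [Field K] [CharZero K] [CommRing A] [Algebra K A]
    [NoZeroSMulDivisors K A]
    (m : ℕ) (hm : 1 ≤ m) (a b P : A)
    (h : ∀ c : K, (a + c • b) ^ m * P = 0) :
    a ^ (m - 1) * b * P = 0 := by
  obtain ⟨m, rfl⟩ : ∃ m', m = m' + 1 := ⟨m - 1, (Nat.succ_pred_eq_of_pos hm).symm⟩
  have expand : ∀ c : K,
      ∑ k : Fin (m + 1 + 1),
        ((c : K)) ^ (k : ℕ) • ((m + 1).choose (k : ℕ) •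
          (a ^ (m + 1 - (k : ℕ)) * b ^ (k : ℕ) * P)) = 0 := by
    intro c
    have h0 := h c
    rw [add_comm, add_pow] at h0
    rw [Finset.sum_mul] at h0
    rw [Fin.sum_univ_eq_sum_range
      (fun k => (c : K) ^ k • ((m + 1).choose k • (a ^ (m + 1 - k) * b ^ k * P)))]
    rw [← h0]
    apply Finset.sum_congr rfl
    intro k hk
    rw [smul_pow]
    simp only [smul_mul_assoc]
    congr 1
    rw [nsmul_eq_mul]
    ring
  have hv := vand_aux (K := K) (m + 1)
    (fun k => ((m + 1).choose (k : ℕ)) • (a ^ (m + 1 - (k : ℕ)) * b ^ (k : ℕ) * P))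
    (fun j => expand ((j : ℕ) : K))
  have h1 := hv 1
  simp only [Fin.val_one, Nat.choose_one_right, pow_one] at h1
  have h2 : ((m + 1 : ℕ) : K) • (a ^ m * b * P) = 0 := by
    rw [Nat.cast_smul_eq_nsmul]
    simpa using h1
  rcases smul_eq_zero.mp h2 with hc | hx
  · exact absurd hc (by exact_mod_cast Nat.succ_ne_zero m)
  · simpa using hx

lemma main_aux {K A : Type} [Field K] [CharZero K] [CommRing A] [Algebra K A]
    [NoZeroSMulDivisors K A]
    (n : ℕ) (M : Submodule K A) (hnil : ∀ x ∈ M, x ^ n = 0) :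
    ∀ d, d + 1 ≤ n → ∀ a ∈ M, ∀ l : List A, l.length = d →
      (∀ y ∈ l, y ∈ M) → a ^ (n - d) * l.prod = 0 := by
  intro d
  induction d with
  | zero =>
    intro _ a ha l hl _
    rw [List.length_eq_zero_iff.mp hl]
    simpa using hnil a ha
  | succ d ih =>
    intro hd a ha l hl hlM
    match l, hl with
    | b :: l', hl =>
      have hb : b ∈ M := hlM b List.mem_cons_self
      have hl' : l'.length = d := by simpa using hl
      have hIH : ∀ c : K, (a + c • b) ^ (n - d) * l'.prod = 0 := by
        intro c
        exact ih (Nat.le_of_succ_le hd) (a + c • b)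
          (M.add_mem ha (M.smul_mem c hb)) l' hl'
          (fun y hy => hlM y (List.mem_cons_of_mem _ hy))
      have hm : 1 ≤ n - d := by omega
      have := polar_aux (n - d) hm a b l'.prod hIH
      have heq : n - d - 1 = n - (d + 1) := by omega
      rw [heq] at this
      rw [List.prod_cons, ← mul_assoc]
      exact this

lemma foldl_mul_aux {A : Type} [Monoid A] :
    ∀ (l : List A) (a : A), List.foldl (· * ·) a l = a * l.prod := by
  intro l
  induction l with
  | nil => simp
  | cons x l ih => intro a; simp [ih, mul_assoc]

theorem stmt_13 (K R : Type) [Field K] [CharZero K]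
    [NonUnitalCommRing R] [Module K R] [SMulCommClass K R R] [IsScalarTower K R R]
    (n : ℕ) (hn : 1 ≤ n)
    (hnil : ∀ r : R, List.foldl (· * ·) r (List.replicate (n - 1) r) = 0) :
    ∀ (a : R) (l : List R), l.length + 1 = n → List.foldl (· * ·) a l = 0 := by
  set A := Unitization K R
  let inrL : R →ₗ[K] A :=
    { toFun := Unitization.inr
      map_add' := fun x y => Unitization.inr_add K x y
      map_smul' := fun c x => Unitization.inr_smul K c x }
  have inr_foldl : ∀ (l : List R) (a : R),
      (Unitization.inr (List.foldl (· * ·) a l) : A) =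
        List.foldl (· * ·) (Unitization.inr a) (l.map Unitization.inr) := by
    intro l
    induction l with
    | nil => intro a; simp
    | cons x l ih => intro a; simp [ih, Unitization.inr_mul]
  set M : Submodule K A := LinearMap.range inrL with hMdef
  have hnil' : ∀ x ∈ M, x ^ n = 0 := by
    rintro x ⟨r, rfl⟩
    have h1 := congrArg (Unitization.inr : R → A) (hnil r)
    rw [inr_foldl] at h1
    rw [List.map_replicate, foldl_mul_aux, List.prod_replicate, ← pow_succ'] at h1
    rw [show n - 1 + 1 = n from by omega] at h1
    simpa [inrL] using h1
  intro a l hlen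
  have hmain := main_aux n M hnil' (n - 1) (by omega)
    (Unitization.inr a) ⟨a, rfl⟩ (l.map Unitization.inr)
    (by simp; omega) (by rintro y hy; simp at hy; obtain ⟨r, _, rfl⟩ := hy; exact ⟨r, rfl⟩)
  have h1 : n - (n - 1) = 1 := by omega
  rw [h1, pow_one] at hmain
  apply Unitization.inr_injective (R := K)
  rw [inr_foldl, foldl_mul_aux]
  simpa using hmain
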